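/- arXiv:1910.01496 — 6 statements merged into one kernel-verified Lean document; each statement's English description precedes it below -/
import Mathlib

section
/- Let K be a field with a valuation v : K → Γ₀, let 𝒪 be its valuation ring and 𝔪 the maximal ideal of 𝒪, and assume 𝒪 ≠ K. Let k ⊆ 𝒪 be a subfield with k ∩ 𝔪 = {0}. Let μ ⊆ SL₂(K) be the set of matrices m with all entries in 𝒪 such that every entry of m − I lies in 𝔪, and let P = { [[x, 1], [0, x⁻¹]] : x ∈ K \ 𝒪 } ⊆ SL₂(K). Then the set of matrices g ∈ SL₂(K) with all entries in k satisfying g·(μ·P) = μ·P is exactly { [[1, b], [0, 1]] : b ∈ k }. -/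
open Pointwise

namespace MuStabAux

open Matrix

set_option linter.unusedSectionVars false

variable {K Γ₀ : Type*} [Field K] [LinearOrderedCommGroupWithZero Γ₀]

/-- upper unitriangular matrix in SL₂ -/
def uni (K : Type*) [Field K] (b : K) : Matrix.SpecialLinearGroup (Fin 2) K :=
  ⟨!![1, b; 0, 1], by simp [Matrix.det_fin_two_of]⟩

lemma mul_lt_one' {a b : Γ₀} (ha : a ≤ 1) (hb : b < 1) : a * b < 1 :=
  lt_of_le_of_lt (mul_le_mul_left ha b) (by rwa [one_mul])

lemma sub_lt_one (v : Valuation K Γ₀) {x y : K} (hx : v x < 1) (hy : v y < 1) :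
    v (x - y) < 1 := by
  rw [sub_eq_add_neg]
  exact v.map_add_lt hx (by rwa [v.map_neg])

lemma uni_mul_neg (b : K) : uni K b * uni K (-b) = 1 := by
  ext i j
  rw [Matrix.SpecialLinearGroup.coe_mul]
  fin_cases i <;> fin_cases j <;>
    simp [uni, Matrix.SpecialLinearGroup.coe_mul, Matrix.mul_apply, Fin.sum_univ_two]

lemma mu_cond (v : Valuation K Γ₀) (B : Matrix (Fin 2) (Fin 2) K)
    (h1 : v (B 0 0) ≤ 1) (h2 : v (B 0 0 - 1) < 1)
    (h3 : v (B 0 1) ≤ 1) (h4 : v (B 0 1) < 1)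
    (h5 : v (B 1 0) ≤ 1) (h6 : v (B 1 0) < 1)
    (h7 : v (B 1 1) ≤ 1) (h8 : v (B 1 1 - 1) < 1) :
    ∀ i j, v (B i j) ≤ 1 ∧ v ((B - 1) i j) < 1 := by
  intro i j
  fin_cases i <;> fin_cases j <;>
    simp only [Matrix.sub_apply, Matrix.one_apply, Fin.zero_eta, Fin.mk_one] <;>
    norm_num <;> simp_all

lemma mk2_eq {a b c d a' b' c' d' : K} (h1 : a = a') (h2 : b = b') (h3 : c = c')
    (h4 : d = d') : !![a,b;c,d] = !![a',b';c',d'] := by rw [h1,h2,h3,h4]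

/-- key lemma: a unipotent with `v b ≤ 1` maps the tube into itself. -/
lemma smul_tube_subset (v : Valuation K Γ₀) {b : K} (hb : v b ≤ 1)
    (μ P : Set (Matrix.SpecialLinearGroup (Fin 2) K))
    (hμ : μ = {m : Matrix.SpecialLinearGroup (Fin 2) K |
        ∀ i j, v ((m : Matrix (Fin 2) (Fin 2) K) i j) ≤ 1 ∧
          v (((m : Matrix (Fin 2) (Fin 2) K) - 1) i j) < 1})
    (hP : P = {m : Matrix.SpecialLinearGroup (Fin 2) K |
        ∃ x : K, 1 < v x ∧ (m : Matrix (Fin 2) (Fin 2) K) = !![x, 1; 0, x⁻¹]}) :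
    uni K b • (μ * P) ⊆ μ * P := by
  intro z hz
  rw [Set.mem_smul_set] at hz
  obtain ⟨w, hw, rfl⟩ := hz
  rw [Set.mem_mul] at hw
  obtain ⟨m, hm, p, hp, rfl⟩ := hw
  rw [hμ, Set.mem_setOf_eq] at hm
  rw [hP, Set.mem_setOf_eq] at hp
  obtain ⟨x, hx, hpx⟩ := hp
  have hvx0 : v x ≠ 0 := ne_of_gt (lt_trans zero_lt_one hx)
  have hx0 : x ≠ 0 := v.ne_zero_iff.mp hvx0
  have hvxb : v (x + b) = v x := v.map_add_eq_of_lt_left (lt_of_le_of_lt hb hx)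
  have hxb0 : x + b ≠ 0 := v.ne_zero_iff.mp (by rw [hvxb]; exact hvx0)
  set y : K := x ^ 2 / (x + b) with hy_def
  have hvy : v y = v x := by
    rw [hy_def, map_div₀, map_pow, hvxb, pow_two, mul_div_assoc,
      div_self hvx0, mul_one]
  have hy1 : 1 < v y := hvy ▸ hx
  have hy0 : y ≠ 0 := v.ne_zero_iff.mp (hvy ▸ hvx0)
  -- entries of m
  obtain ⟨ma, mb, mc, md, hAeta⟩ :
      ∃ a b c d, (m : Matrix (Fin 2) (Fin 2) K) = !![a, b; c, d] :=
    ⟨_, _, _, _, Matrix.eta_fin_two _⟩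
  have hm00 : v (ma - 1) < 1 := by
    have := (hm 0 0).2; rw [hAeta] at this
    simpa [Matrix.sub_apply, Matrix.one_apply] using this
  have hm01 : v mb < 1 := by
    have := (hm 0 1).2; rw [hAeta] at this
    simpa [Matrix.sub_apply, Matrix.one_apply] using this
  have hm10 : v mc < 1 := by
    have := (hm 1 0).2; rw [hAeta] at this
    simpa [Matrix.sub_apply, Matrix.one_apply] using this
  have hm11 : v (md - 1) < 1 := by
    have := (hm 1 1).2; rw [hAeta] at this
    simpa [Matrix.sub_apply, Matrix.one_apply] using this
  have hm00le : v ma ≤ 1 := by have := (hm 0 0).1; rw [hAeta] at this; simpa using this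
  have hm01le : v mb ≤ 1 := by have := (hm 0 1).1; rw [hAeta] at this; simpa using this
  have hm10le : v mc ≤ 1 := by have := (hm 1 0).1; rw [hAeta] at this; simpa using this
  have hm11le : v md ≤ 1 := by have := (hm 1 1).1; rw [hAeta] at this; simpa using this
  -- the scaling factors
  have hvinv : (v x)⁻¹ < 1 := inv_lt_one_of_one_lt₀ hx
  have ht1 : v ((x + b) / x) = 1 := by rw [map_div₀, hvxb, div_self hvx0]
  have ht2 : v ((x + b) / x - 1) < 1 := by
    have he : (x + b) / x - 1 = b * x⁻¹ := by field_simp; ring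
    rw [he, v.map_mul, map_inv₀]
    exact mul_lt_one' hb hvinv
  have hs1 : v (x / (x + b)) = 1 := by rw [map_div₀, hvxb, div_self hvx0]
  have hs2 : v (x / (x + b) - 1) < 1 := by
    have he : x / (x + b) - 1 = -(b * (x + b)⁻¹) := by field_simp; ring
    rw [he, v.map_neg, v.map_mul, map_inv₀, hvxb]
    exact mul_lt_one' hb hvinv
  -- the shifted parabolic point and the new μ-element
  set p' : Matrix.SpecialLinearGroup (Fin 2) K :=
    ⟨!![y, 1; 0, y⁻¹], by simp [Matrix.det_fin_two_of, mul_inv_cancel₀ hy0]⟩ with hp'_def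
  set m' : Matrix.SpecialLinearGroup (Fin 2) K := uni K b * m * p * p'⁻¹ with hm'_def
  set E00 : K := (ma + b * mc) * ((x + b) / x) with hE00
  set E01 : K := (mb + b * md - b * ma - b * b * mc) * (x / (x + b)) with hE01
  set E10 : K := mc * ((x + b) / x) with hE10
  set E11 : K := (md - b * mc) * (x / (x + b)) with hE11
  have hm'val : (m' : Matrix (Fin 2) (Fin 2) K) = !![E00, E01; E10, E11] := by
    have hinv : ((p'⁻¹ : Matrix.SpecialLinearGroup (Fin 2) K) : Matrix (Fin 2) (Fin 2) K)
        = !![y⁻¹, -1; 0, y] := by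
      rw [Matrix.SpecialLinearGroup.coe_inv]
      show Matrix.adjugate !![y, 1; 0, y⁻¹] = _
      rw [Matrix.adjugate_fin_two]
      norm_num
    have huni : ((uni K b : Matrix.SpecialLinearGroup (Fin 2) K) : Matrix (Fin 2) (Fin 2) K)
        = !![1, b; 0, 1] := rfl
    have h1 : (m' : Matrix (Fin 2) (Fin 2) K)
        = !![1, b; 0, 1] * !![ma, mb; mc, md] * !![x, 1; 0, x⁻¹] * !![y⁻¹, -1; 0, y] := by
      rw [hm'_def]
      simp only [Matrix.SpecialLinearGroup.coe_mul, hinv, huni, hpx, hAeta]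
    rw [h1, Matrix.mul_fin_two, Matrix.mul_fin_two, Matrix.mul_fin_two,
      hE00, hE01, hE10, hE11]
    refine mk2_eq ?_ ?_ ?_ ?_ <;> (rw [hy_def]; field_simp; ring)
  refine ⟨m', ?_, p', ?_, ?_⟩
  · rw [hμ, Set.mem_setOf_eq, hm'val]
    have c00 : (!![E00, E01; E10, E11] : Matrix (Fin 2) (Fin 2) K) 0 0 = E00 := by simp
    have c01 : (!![E00, E01; E10, E11] : Matrix (Fin 2) (Fin 2) K) 0 1 = E01 := by simp
    have c10 : (!![E00, E01; E10, E11] : Matrix (Fin 2) (Fin 2) K) 1 0 = E10 := by simp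
    have c11 : (!![E00, E01; E10, E11] : Matrix (Fin 2) (Fin 2) K) 1 1 = E11 := by simp
    refine mu_cond v _ ?_ ?_ ?_ ?_ ?_ ?_ ?_ ?_ <;>
      simp only [Matrix.of_apply, Matrix.cons_val', Matrix.cons_val_zero, Matrix.cons_val_one,
        Matrix.empty_val', Matrix.cons_val_fin_one, Matrix.head_cons, hE00, hE01, hE10, hE11]
    · rw [v.map_mul, ht1, mul_one]
      refine le_trans (v.map_add _ _) (max_le hm00le ?_)
      rw [v.map_mul]; exact mul_le_one' hb hm10le
    · have he : (ma + b * mc) * ((x + b) / x) - 1 =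
          (ma - 1) * ((x + b) / x) + (b * mc) * ((x + b) / x) + ((x + b) / x - 1) := by
        ring
      rw [he]
      refine v.map_add_lt (v.map_add_lt ?_ ?_) ht2
      · rw [v.map_mul, ht1, mul_one]; exact hm00
      · rw [v.map_mul, ht1, mul_one, v.map_mul]
        exact mul_lt_one' hb hm10
    · rw [v.map_mul, hs1, mul_one]
      refine le_trans (v.map_sub _ _) (max_le (le_trans (v.map_sub _ _) (max_le ?_ ?_)) ?_)
      · refine le_trans (v.map_add _ _) (max_le hm01le ?_)
        rw [v.map_mul]; exact mul_le_one' hb hm11le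
      · rw [v.map_mul]; exact mul_le_one' hb hm00le
      · rw [v.map_mul, v.map_mul]
        exact mul_le_one' (mul_le_one' hb hb) hm10le
    · have he : mb + b * md - b * ma - b * b * mc =
          mb + b * (md - 1) - b * (ma - 1) - b * b * mc := by ring
      rw [v.map_mul, hs1, mul_one, he]
      refine sub_lt_one v (sub_lt_one v (v.map_add_lt hm01 ?_) ?_) ?_
      · rw [v.map_mul]; exact mul_lt_one' hb hm11
      · rw [v.map_mul]; exact mul_lt_one' hb hm00
      · rw [v.map_mul, v.map_mul]
        exact mul_lt_one' (mul_le_one' hb hb) hm10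
    · rw [v.map_mul, ht1, mul_one]; exact hm10le
    · rw [v.map_mul, ht1, mul_one]; exact hm10
    · rw [v.map_mul, hs1, mul_one]
      refine le_trans (v.map_sub _ _) (max_le hm11le ?_)
      rw [v.map_mul]; exact mul_le_one' hb hm10le
    · have he : (md - b * mc) * (x / (x + b)) - 1 =
          (md - 1) * (x / (x + b)) - (b * mc) * (x / (x + b)) + (x / (x + b) - 1) := by
        ring
      rw [he]
      refine v.map_add_lt (sub_lt_one v ?_ ?_) hs2
      · rw [v.map_mul, hs1, mul_one]; exact hm11
      · rw [v.map_mul, hs1, mul_one, v.map_mul]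
        exact mul_lt_one' hb hm10
  · rw [hP, Set.mem_setOf_eq]
    exact ⟨y, hy1, rfl⟩
  · rw [hm'_def, smul_eq_mul]
    group

end MuStabAux

open MuStabAux Matrix

/-- The `μ`-stabilizer (over a lifted residue field `k`) of the tube `μ·P` around the
type at infinity of the curve `x ↦ [[x,1],[0,x⁻¹]]` in `SL₂` is the group of upper
unitriangular matrices with entries in `k`. -/
theorem mu_stabilizer_unipotent
    {K Γ₀ : Type*} [Field K] [LinearOrderedCommGroupWithZero Γ₀]
    (v : Valuation K Γ₀) (hnt : ∃ x : K, 1 < v x)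
    (k : Subfield K) (hkO : ∀ a ∈ k, v a ≤ 1) (hkm : ∀ a ∈ k, v a < 1 → a = 0)
    (μ P : Set (Matrix.SpecialLinearGroup (Fin 2) K))
    (hμ : μ = {m : Matrix.SpecialLinearGroup (Fin 2) K |
        ∀ i j, v ((m : Matrix (Fin 2) (Fin 2) K) i j) ≤ 1 ∧
          v (((m : Matrix (Fin 2) (Fin 2) K) - 1) i j) < 1})
    (hP : P = {m : Matrix.SpecialLinearGroup (Fin 2) K |
        ∃ x : K, 1 < v x ∧ (m : Matrix (Fin 2) (Fin 2) K) = !![x, 1; 0, x⁻¹]}) :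
    {g : Matrix.SpecialLinearGroup (Fin 2) K |
        (∀ i j, (g : Matrix (Fin 2) (Fin 2) K) i j ∈ k) ∧ g • (μ * P) = μ * P}
      = {g : Matrix.SpecialLinearGroup (Fin 2) K |
          ∃ b ∈ k, (g : Matrix (Fin 2) (Fin 2) K) = !![1, b; 0, 1]} := by
  obtain ⟨x, hx⟩ := hnt
  have hvx0 : v x ≠ 0 := ne_of_gt (lt_trans zero_lt_one hx)
  have hx0 : x ≠ 0 := v.ne_zero_iff.mp hvx0
  ext g
  simp only [Set.mem_setOf_eq]
  constructor
  · rintro ⟨hk, hEq⟩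
    -- the base point
    set p₀ : Matrix.SpecialLinearGroup (Fin 2) K :=
      ⟨!![x, 1; 0, x⁻¹], by simp [Matrix.det_fin_two_of, mul_inv_cancel₀ hx0]⟩ with hp₀_def
    have hone : (1 : Matrix.SpecialLinearGroup (Fin 2) K) ∈ μ := by
      rw [hμ, Set.mem_setOf_eq]
      have : ((1 : Matrix.SpecialLinearGroup (Fin 2) K) : Matrix (Fin 2) (Fin 2) K) = 1 := rfl
      rw [this]
      refine mu_cond v _ ?_ ?_ ?_ ?_ ?_ ?_ ?_ ?_ <;>
        simp [Matrix.one_apply]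
    have hp₀P : p₀ ∈ P := by
      rw [hP, Set.mem_setOf_eq]; exact ⟨x, hx, rfl⟩
    have hp₀ : p₀ ∈ μ * P := by
      have := Set.mul_mem_mul hone hp₀P
      rwa [one_mul] at this
    have hgp : g * p₀ ∈ μ * P := by
      rw [← hEq]
      exact ⟨p₀, hp₀, rfl⟩
    rw [Set.mem_mul] at hgp
    obtain ⟨m, hm, p'', hp'', hmp⟩ := hgp
    rw [hμ, Set.mem_setOf_eq] at hm
    rw [hP, Set.mem_setOf_eq] at hp''
    obtain ⟨y, hy, hp''val⟩ := hp''
    -- entries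
    obtain ⟨ma, mb, mc, md, hAeta⟩ :
        ∃ a b c d, (m : Matrix (Fin 2) (Fin 2) K) = !![a, b; c, d] :=
      ⟨_, _, _, _, Matrix.eta_fin_two _⟩
    obtain ⟨ga, gb, gc, gd, hgeta⟩ :
        ∃ a b c d, (g : Matrix (Fin 2) (Fin 2) K) = !![a, b; c, d] :=
      ⟨_, _, _, _, Matrix.eta_fin_two _⟩
    have hm00 : v (ma - 1) < 1 := by
      have := (hm 0 0).2; rw [hAeta] at this
      simpa [Matrix.sub_apply, Matrix.one_apply] using this
    have hm10 : v mc < 1 := by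
      have := (hm 1 0).2; rw [hAeta] at this
      simpa [Matrix.sub_apply, Matrix.one_apply] using this
    have hm01le : v mb ≤ 1 := by have := (hm 0 1).1; rw [hAeta] at this; simpa using this
    have hm11le : v md ≤ 1 := by have := (hm 1 1).1; rw [hAeta] at this; simpa using this
    have hga : ga ∈ k := by have := hk 0 0; rw [hgeta] at this; simpa using this
    have hgb : gb ∈ k := by have := hk 0 1; rw [hgeta] at this; simpa using this
    have hgc : gc ∈ k := by have := hk 1 0; rw [hgeta] at this; simpa using this
    have hgd : gd ∈ k := by have := hk 1 1; rw [hgeta] at this; simpa using this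
    -- matrix equation
    have hmat : (m : Matrix (Fin 2) (Fin 2) K) * (p'' : Matrix (Fin 2) (Fin 2) K)
        = (g : Matrix (Fin 2) (Fin 2) K) * (p₀ : Matrix (Fin 2) (Fin 2) K) := by
      have := congrArg (fun z : Matrix.SpecialLinearGroup (Fin 2) K =>
        (z : Matrix (Fin 2) (Fin 2) K)) hmp
      simpa [Matrix.SpecialLinearGroup.coe_mul] using this
    have hp₀val : (p₀ : Matrix (Fin 2) (Fin 2) K) = !![x, 1; 0, x⁻¹] := rfl
    rw [hAeta, hgeta, hp''val, hp₀val, Matrix.mul_fin_two, Matrix.mul_fin_two] at hmat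
    have E01 : ma * 1 + mb * y⁻¹ = ga * 1 + gb * x⁻¹ := by
      have := congrFun (congrFun hmat 0) 1
      simpa using this
    have E11 : mc * 1 + md * y⁻¹ = gc * 1 + gd * x⁻¹ := by
      have := congrFun (congrFun hmat 1) 1
      simpa using this
    have hyinv : (v y)⁻¹ < 1 := inv_lt_one_of_one_lt₀ hy
    have hxinv : (v x)⁻¹ < 1 := inv_lt_one_of_one_lt₀ hx
    -- conclude ga = 1
    have hga1 : ga = 1 := by
      have heq : ga - 1 = (ma - 1) + mb * y⁻¹ - gb * x⁻¹ := by linear_combination -E01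
      have hlt : v (ga - 1) < 1 := by
        rw [heq]
        refine sub_lt_one v (v.map_add_lt hm00 ?_) ?_
        · rw [v.map_mul, map_inv₀]; exact mul_lt_one' hm01le hyinv
        · rw [v.map_mul, map_inv₀]; exact mul_lt_one' (hkO _ hgb) hxinv
      have := hkm _ (k.sub_mem hga k.one_mem) hlt
      exact sub_eq_zero.mp this
    have hgc0 : gc = 0 := by
      have heq : gc = mc + md * y⁻¹ - gd * x⁻¹ := by linear_combination -E11
      have hlt : v gc < 1 := by
        rw [heq]
        refine sub_lt_one v (v.map_add_lt hm10 ?_) ?_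
        · rw [v.map_mul, map_inv₀]; exact mul_lt_one' hm11le hyinv
        · rw [v.map_mul, map_inv₀]; exact mul_lt_one' (hkO _ hgd) hxinv
      exact hkm _ hgc hlt
    have hdet := g.property
    rw [hgeta, Matrix.det_fin_two_of] at hdet
    have hgd1 : gd = 1 := by
      rw [hga1, hgc0] at hdet; linear_combination hdet
    exact ⟨gb, hgb, by rw [hgeta, hga1, hgc0, hgd1]⟩
  · rintro ⟨b, hbk, hgval⟩
    have hgu : g = uni K b := Subtype.ext (by rw [hgval]; rfl)
    constructor
    · intro i j
      rw [hgval]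
      fin_cases i <;> fin_cases j <;> simp [k.one_mem, k.zero_mem, hbk]
    · rw [hgu]
      have hvb : v b ≤ 1 := hkO b hbk
      have hvnb : v (-b) ≤ 1 := by rwa [v.map_neg]
      refine subset_antisymm (smul_tube_subset v hvb μ P hμ hP) ?_
      intro z hz
      have h2 : uni K (-b) * z ∈ μ * P := by
        have := smul_tube_subset v hvnb μ P hμ hP (Set.smul_mem_smul_set hz)
        rwa [smul_eq_mul] at this
      refine Set.mem_smul_set.mpr ⟨uni K (-b) * z, h2, ?_⟩
      rw [smul_eq_mul, ← mul_assoc, uni_mul_neg, one_mul]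
end

section
/- Let K be a field with a valuation v : K → Γ₀, let 𝒪 be its valuation ring and 𝔪 the maximal ideal of 𝒪, and assume 𝒪 ≠ K. Let k ⊆ 𝒪 be a subfield with k ∩ 𝔪 = {0}. Let μ ⊆ SL₂(K) be the set of matrices m with all entries in 𝒪 such that every entry of m − I lies in 𝔪, and let Q = { [[x, 0], [1, x⁻¹]] : x ∈ K \ 𝒪 } ⊆ SL₂(K). Then the set of matrices g ∈ SL₂(K) with all entries in k satisfying g·(μ·Q) = μ·Q is exactly { [[a, 0], [0, a⁻¹]] : a ∈ k, a ≠ 0 }. -/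
open Pointwise

section MuStabAux

variable {K Γ₀ : Type*} [Field K] [LinearOrderedCommGroupWithZero Γ₀]

private lemma mu_val_eq_one (v : Valuation K Γ₀) {u : K} (h : v (u - 1) < 1) : v u = 1 := by
  have : u = (u - 1) + 1 := by ring
  rw [this, Valuation.map_add_eq_of_lt_right]
  · exact v.map_one
  · simpa using h

private lemma mu_cond (v : Valuation K Γ₀) {p q r s : K}
    (hp : v (p - 1) < 1) (hq : v q < 1) (hr : v r < 1) (hs : v (s - 1) < 1) :
    ∀ i j, v ((!![p, q; r, s] : Matrix (Fin 2) (Fin 2) K) i j) ≤ 1 ∧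
      v (((!![p, q; r, s] : Matrix (Fin 2) (Fin 2) K) - 1) i j) < 1 := by
  have hp1 : v p ≤ 1 := by
    have : v p = 1 := mu_val_eq_one v hp
    exact this.le
  have hs1 : v s ≤ 1 := (mu_val_eq_one v hs).le
  intro i j
  fin_cases i <;> fin_cases j <;>
    simp [Matrix.sub_apply, Matrix.one_apply, hp1, hq, hr, hs1, hp, hs, hq.le, hr.le]

private lemma diag_smul_subset (v : Valuation K Γ₀)
    (μ Q : Set (Matrix.SpecialLinearGroup (Fin 2) K))
    (hμ : μ = {m : Matrix.SpecialLinearGroup (Fin 2) K |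
        ∀ i j, v ((m : Matrix (Fin 2) (Fin 2) K) i j) ≤ 1 ∧
          v (((m : Matrix (Fin 2) (Fin 2) K) - 1) i j) < 1})
    (hQ : Q = {m : Matrix.SpecialLinearGroup (Fin 2) K |
        ∃ x : K, 1 < v x ∧ (m : Matrix (Fin 2) (Fin 2) K) = !![x, 0; 1, x⁻¹]})
    {a : K} (ha : v a = 1) (g : Matrix.SpecialLinearGroup (Fin 2) K)
    (hg : (g : Matrix (Fin 2) (Fin 2) K) = !![a, 0; 0, a⁻¹]) :
    g • (μ * Q) ⊆ μ * Q := by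
  have ha0 : a ≠ 0 := by
    intro h; rw [h, v.map_zero] at ha; exact zero_ne_one ha
  rintro s hs
  rw [Set.mem_smul_set] at hs
  obtain ⟨t, ht, rfl⟩ := hs
  rw [Set.mem_mul] at ht
  obtain ⟨m, hm, q, hqQ, rfl⟩ := ht
  obtain ⟨x, hx, hqx⟩ := hQ ▸ hqQ
  have hx0 : x ≠ 0 := by
    intro h; rw [h, v.map_zero] at hx; exact (not_lt_of_gt hx) zero_lt_one
  have hax : a * x ≠ 0 := mul_ne_zero ha0 hx0
  set q' : Matrix.SpecialLinearGroup (Fin 2) K :=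
    ⟨!![a * x, 0; 1, (a * x)⁻¹], by rw [Matrix.det_fin_two_of]; field_simp; simp⟩ with hq'
  have hq'Q : q' ∈ Q := by
    rw [hQ]
    exact ⟨a * x, by rw [v.map_mul, ha, one_mul]; exact hx, rfl⟩
  rw [Set.mem_mul]
  refine ⟨(g * m * q) * q'⁻¹, ?_, q', hq'Q, by
    rw [smul_eq_mul]; group⟩
  -- compute the matrix of (g * m * q) * q'⁻¹
  have hq'inv : ((q'⁻¹ : Matrix.SpecialLinearGroup (Fin 2) K) : Matrix (Fin 2) (Fin 2) K)
      = !![(a * x)⁻¹, 0; -1, a * x] := by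
    rw [Matrix.SpecialLinearGroup.SL2_inv_expl]
    ext i j
    fin_cases i <;> fin_cases j <;> simp [hq']
  have hmμ := hμ ▸ hm
  set p00 := (m : Matrix (Fin 2) (Fin 2) K) 0 0 with hp00
  set p01 := (m : Matrix (Fin 2) (Fin 2) K) 0 1 with hp01
  set p10 := (m : Matrix (Fin 2) (Fin 2) K) 1 0 with hp10
  set p11 := (m : Matrix (Fin 2) (Fin 2) K) 1 1 with hp11
  have hmval : (m : Matrix (Fin 2) (Fin 2) K) = !![p00, p01; p10, p11] :=
    Matrix.etaExpand_eq (m : Matrix (Fin 2) (Fin 2) K) ▸ rfl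
  have h00 : v (p00 - 1) < 1 := by simpa [Matrix.sub_apply, Matrix.one_apply] using (hmμ 0 0).2
  have h01 : v p01 < 1 := by simpa [Matrix.sub_apply, Matrix.one_apply] using (hmμ 0 1).2
  have h10 : v p10 < 1 := by simpa [Matrix.sub_apply, Matrix.one_apply] using (hmμ 1 0).2
  have h11 : v (p11 - 1) < 1 := by simpa [Matrix.sub_apply, Matrix.one_apply] using (hmμ 1 1).2
  have hxinv : v x⁻¹ < 1 := by
    rw [← (v.one_lt_val_iff hx0)]; exact hx
  have key : (((g * m * q) * q'⁻¹ : Matrix.SpecialLinearGroup (Fin 2) K) :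
      Matrix (Fin 2) (Fin 2) K)
      = !![p00 + p01 * x⁻¹ * (1 - a), a * a * p01;
           a⁻¹ * a⁻¹ * p10 + p11 * x⁻¹ * (a⁻¹ * a⁻¹ - a⁻¹), p11] := by
    have : (((g * m * q) * q'⁻¹ : Matrix.SpecialLinearGroup (Fin 2) K) :
        Matrix (Fin 2) (Fin 2) K)
        = (g : Matrix (Fin 2) (Fin 2) K) * (m : Matrix (Fin 2) (Fin 2) K) *
          (q : Matrix (Fin 2) (Fin 2) K) *
          ((q'⁻¹ : Matrix.SpecialLinearGroup (Fin 2) K) : Matrix (Fin 2) (Fin 2) K) := by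
      simp
    rw [this, hg, hmval, hqx, hq'inv]
    ext i j
    fin_cases i <;> fin_cases j <;>
      · simp [Matrix.mul_apply, Fin.sum_univ_two]
        try field_simp
        try ring
  rw [hμ]
  show ∀ i j, _
  rw [key]
  apply mu_cond v
  · have : p00 + p01 * x⁻¹ * (1 - a) - 1 = (p00 - 1) + p01 * x⁻¹ * (1 - a) := by ring
    rw [this]
    refine lt_of_le_of_lt (v.map_add _ _) (max_lt h00 ?_)
    have h1a : v (1 - a) ≤ 1 := by
      refine le_trans (v.map_sub _ _) (max_le ?_ ?_) <;> simp [ha]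
    calc v (p01 * x⁻¹ * (1 - a)) = v p01 * v x⁻¹ * v (1 - a) := by
          rw [v.map_mul, v.map_mul]
      _ ≤ v p01 * 1 * 1 := mul_le_mul' (mul_le_mul' le_rfl hxinv.le) h1a
      _ = v p01 := by rw [mul_one, mul_one]
      _ < 1 := h01
  · rw [v.map_mul, v.map_mul, ha, one_mul, one_mul]; exact h01
  · have hainv : v a⁻¹ = 1 := by rw [map_inv₀, ha, inv_one]
    refine lt_of_le_of_lt (v.map_add _ _) (max_lt ?_ ?_)
    · rw [v.map_mul, v.map_mul, hainv, one_mul, one_mul]; exact h10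
    · have haa : v (a⁻¹ * a⁻¹ - a⁻¹) ≤ 1 := by
        refine le_trans (v.map_sub _ _) (max_le ?_ ?_) <;>
          simp [v.map_mul, hainv]
      have hv11 : v p11 ≤ 1 := (mu_val_eq_one v h11).le
      calc v (p11 * x⁻¹ * (a⁻¹ * a⁻¹ - a⁻¹)) = v p11 * v x⁻¹ * v (a⁻¹ * a⁻¹ - a⁻¹) := by
            rw [v.map_mul, v.map_mul]
        _ ≤ 1 * v x⁻¹ * 1 := by gcongr
        _ = v x⁻¹ := by rw [one_mul, mul_one]
        _ < 1 := hxinv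
  · exact h11

end MuStabAux

/-- The `μ`-stabilizer (over a lifted residue field `k`) of the tube `μ·Q` around the
type at infinity of the curve `x ↦ [[x,0],[1,x⁻¹]]` in `SL₂` is the group of diagonal
matrices with entries in `k`. -/
theorem mu_stabilizer_torus
    {K Γ₀ : Type*} [Field K] [LinearOrderedCommGroupWithZero Γ₀]
    (v : Valuation K Γ₀) (hnt : ∃ x : K, 1 < v x)
    (k : Subfield K) (hkO : ∀ a ∈ k, v a ≤ 1) (hkm : ∀ a ∈ k, v a < 1 → a = 0)
    (μ Q : Set (Matrix.SpecialLinearGroup (Fin 2) K))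
    (hμ : μ = {m : Matrix.SpecialLinearGroup (Fin 2) K |
        ∀ i j, v ((m : Matrix (Fin 2) (Fin 2) K) i j) ≤ 1 ∧
          v (((m : Matrix (Fin 2) (Fin 2) K) - 1) i j) < 1})
    (hQ : Q = {m : Matrix.SpecialLinearGroup (Fin 2) K |
        ∃ x : K, 1 < v x ∧ (m : Matrix (Fin 2) (Fin 2) K) = !![x, 0; 1, x⁻¹]}) :
    {g : Matrix.SpecialLinearGroup (Fin 2) K |
        (∀ i j, (g : Matrix (Fin 2) (Fin 2) K) i j ∈ k) ∧ g • (μ * Q) = μ * Q}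
      = {g : Matrix.SpecialLinearGroup (Fin 2) K |
          ∃ a ∈ k, a ≠ 0 ∧ (g : Matrix (Fin 2) (Fin 2) K) = !![a, 0; 0, a⁻¹]} := by
  ext g
  simp only [Set.mem_setOf_eq]
  constructor
  · rintro ⟨hgk, hstab⟩
    obtain ⟨x, hx⟩ := hnt
    have hx0 : x ≠ 0 := by
      intro h; rw [h, v.map_zero] at hx; exact (not_lt_of_gt hx) zero_lt_one
    set q : Matrix.SpecialLinearGroup (Fin 2) K :=
      ⟨!![x, 0; 1, x⁻¹], by rw [Matrix.det_fin_two_of]; field_simp; simp⟩ with hqdef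
    have h1μ : (1 : Matrix.SpecialLinearGroup (Fin 2) K) ∈ μ := by
      rw [hμ]
      intro i j
      constructor
      · fin_cases i <;> fin_cases j <;> simp [Matrix.one_apply]
      · simp
    have hqQ : q ∈ Q := by rw [hQ]; exact ⟨x, hx, rfl⟩
    have hqmem : q ∈ μ * Q := Set.mem_mul.mpr ⟨1, h1μ, q, hqQ, one_mul q⟩
    have hgq : g * q ∈ μ * Q := by
      rw [← hstab]
      exact ⟨q, hqmem, rfl⟩
    obtain ⟨m, hm, q', hq'Q, heq⟩ := Set.mem_mul.mp hgq
    obtain ⟨y, hy, hq'y⟩ := hQ ▸ hq'Q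
    have hy0 : y ≠ 0 := by
      intro h; rw [h, v.map_zero] at hy; exact (not_lt_of_gt hy) zero_lt_one
    have E : (g : Matrix (Fin 2) (Fin 2) K) * (q : Matrix (Fin 2) (Fin 2) K)
        = (m : Matrix (Fin 2) (Fin 2) K) * (q' : Matrix (Fin 2) (Fin 2) K) := by
      rw [← Matrix.SpecialLinearGroup.coe_mul, ← Matrix.SpecialLinearGroup.coe_mul, heq]
    set a := (g : Matrix (Fin 2) (Fin 2) K) 0 0 with hadef
    set b := (g : Matrix (Fin 2) (Fin 2) K) 0 1 with hbdef
    set c := (g : Matrix (Fin 2) (Fin 2) K) 1 0 with hcdef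
    set d := (g : Matrix (Fin 2) (Fin 2) K) 1 1 with hddef
    have hmμ := hμ ▸ hm
    set p01 := (m : Matrix (Fin 2) (Fin 2) K) 0 1 with hp01
    set p10 := (m : Matrix (Fin 2) (Fin 2) K) 1 0 with hp10
    set p11 := (m : Matrix (Fin 2) (Fin 2) K) 1 1 with hp11
    have h01 : v p01 < 1 := by simpa [Matrix.sub_apply, Matrix.one_apply] using (hmμ 0 1).2
    have h10 : v p10 < 1 := by simpa [Matrix.sub_apply, Matrix.one_apply] using (hmμ 1 0).2
    have h11 : v p11 = 1 := mu_val_eq_one v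
      (by simpa [Matrix.sub_apply, Matrix.one_apply] using (hmμ 1 1).2)
    have e01 : b * x⁻¹ = p01 * y⁻¹ := by
      have := congrFun (congrFun E 0) 1
      simpa [Matrix.mul_apply, Fin.sum_univ_two, hqdef, hq'y] using this
    have e11 : d * x⁻¹ = p11 * y⁻¹ := by
      have := congrFun (congrFun E 1) 1
      simpa [Matrix.mul_apply, Fin.sum_univ_two, hqdef, hq'y] using this
    have e10 : c * x + d = p10 * y + p11 := by
      have := congrFun (congrFun E 1) 0
      simpa [Matrix.mul_apply, Fin.sum_univ_two, hqdef, hq'y] using this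
    -- d ≠ 0 hence v d = 1
    have hd0 : d ≠ 0 := by
      intro h
      rw [h, zero_mul] at e11
      have hp11ne : p11 ≠ 0 := by
        intro h'; rw [h', v.map_zero] at h11; exact zero_ne_one h11
      exact (mul_ne_zero hp11ne (inv_ne_zero hy0)) e11.symm
    have hvd : v d = 1 := by
      rcases lt_or_eq_of_le (hkO d (hgk 1 1)) with h | h
      · exact absurd (hkm d (hgk 1 1) h) hd0
      · exact h
    -- v y = v x
    have hvy : v y = v x := by
      have := congrArg v e11
      rw [v.map_mul, v.map_mul, hvd, h11, one_mul, one_mul, map_inv₀, map_inv₀] at this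
      exact inv_injective this.symm
    have hvx0 : v x ≠ 0 := by
      intro h; rw [h] at hx; exact (not_lt_of_gt hx) zero_lt_one
    -- b = 0
    have hb : b = 0 := by
      apply hkm b (hgk 0 1)
      have := congrArg v e01
      rw [v.map_mul, v.map_mul, map_inv₀, map_inv₀, hvy] at this
      have hvb : v b = v p01 := mul_right_cancel₀ (inv_ne_zero hvx0) this
      rw [hvb]; exact h01
    -- c = 0
    have hc : c = 0 := by
      by_contra hc0
      have hvc : v c = 1 := by
        rcases lt_or_eq_of_le (hkO c (hgk 1 0)) with h | h
        · exact absurd (hkm c (hgk 1 0) h) hc0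
        · exact h
      have e10' : c * x = p10 * y + (p11 - d) := by linear_combination e10
      have hlhs : v (c * x) = v x := by rw [v.map_mul, hvc, one_mul]
      have hrhs : v (p10 * y + (p11 - d)) < v x := by
        refine lt_of_le_of_lt (v.map_add _ _) (max_lt ?_ ?_)
        · rw [v.map_mul, hvy]
          calc v p10 * v x = v x * v p10 := mul_comm _ _
            _ < v x * 1 := mul_lt_mul_of_le_of_lt_of_nonneg_of_pos le_rfl h10 zero_le'
                  (zero_lt_iff.mpr hvx0)
            _ = v x := mul_one _
        · refine lt_of_le_of_lt (le_trans (v.map_sub _ _) (max_le ?_ ?_)) hx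
          · rw [h11]
          · rw [hvd]
      rw [e10'] at hlhs
      exact absurd hlhs (ne_of_lt hrhs)
    -- conclude
    have hdet : a * d - b * c = 1 := by
      have := g.2
      rwa [Matrix.det_fin_two] at this
    rw [hb, hc, mul_zero, sub_zero] at hdet
    have ha0 : a ≠ 0 := left_ne_zero_of_mul_eq_one hdet
    have hd : d = a⁻¹ := (inv_eq_of_mul_eq_one_right hdet).symm
    refine ⟨a, hgk 0 0, ha0, ?_⟩
    have : (g : Matrix (Fin 2) (Fin 2) K) =
        !![a, b; c, d] := Matrix.etaExpand_eq (g : Matrix (Fin 2) (Fin 2) K) ▸ rfl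
    rw [this, hb, hc, hd]
  · rintro ⟨a, hak, ha0, hga⟩
    have hva : v a = 1 := by
      rcases lt_or_eq_of_le (hkO a hak) with h | h
      · exact absurd (hkm a hak h) ha0
      · exact h
    constructor
    · intro i j
      fin_cases i <;> fin_cases j <;>
        simp [hga, hak, k.inv_mem hak, k.zero_mem]
    · apply Set.Subset.antisymm
      · exact diag_smul_subset v μ Q hμ hQ hva g hga
      · have hginv : ((g⁻¹ : Matrix.SpecialLinearGroup (Fin 2) K) :
            Matrix (Fin 2) (Fin 2) K) = !![a⁻¹, 0; 0, (a⁻¹)⁻¹] := by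
          rw [Matrix.SpecialLinearGroup.SL2_inv_expl]
          ext i j
          fin_cases i <;> fin_cases j <;> simp [hga]
        have hva' : v a⁻¹ = 1 := by rw [map_inv₀, hva, inv_one]
        have hsub := diag_smul_subset v μ Q hμ hQ hva' g⁻¹ hginv
        intro s hs
        have : g⁻¹ • s ∈ g⁻¹ • (μ * Q) := Set.smul_mem_smul_set hs
        have h2 : g⁻¹ • s ∈ μ * Q := hsub this
        have := Set.smul_mem_smul_set (a := g) h2
        rwa [smul_inv_smul] at this
end

section
/- Let K be a field with a valuation v : K → Γ₀, with valuation ring 𝒪 and maximal ideal 𝔪. Let g ∈ 𝒪 and let α ∈ K \ 𝒪. Set ε = g·α⁻¹ and β = (1+ε)⁻¹·α. Then ε ∈ 𝔪, 1 + ε is a unit of 𝒪, β ∈ K \ 𝒪, and the following identity of 2×2 matrices over K holds: [[1, g], [0, 1]] * [[α, 1], [0, α⁻¹]] = [[1+ε, 0], [0, (1+ε)⁻¹]] * [[β, 1], [0, β⁻¹]]. -/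
/-- The matrix computation of Example 2.6: multiplying a point at infinity of the
curve `x ↦ [[x,1],[0,x⁻¹]]` by a unipotent matrix with entry `g ∈ 𝒪` moves it by an
element of `μ` to another point of the curve. -/
theorem unipotent_matrix_identity
    {K Γ₀ : Type*} [Field K] [LinearOrderedCommGroupWithZero Γ₀]
    (v : Valuation K Γ₀) (g α : K) (hg : v g ≤ 1) (hα : 1 < v α)
    (ε β : K) (hε : ε = g * α⁻¹) (hβ : β = (1 + ε)⁻¹ * α) :
    v ε < 1 ∧ v (1 + ε) = 1 ∧ 1 < v β ∧
      (!![1, g; 0, 1] : Matrix (Fin 2) (Fin 2) K) * !![α, 1; 0, α⁻¹] =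
        !![1 + ε, 0; 0, (1 + ε)⁻¹] * !![β, 1; 0, β⁻¹] := by
  have hvα0 : v α ≠ 0 := by
    intro h; rw [h] at hα; exact absurd hα (by simp)
  have hα0 : α ≠ 0 := v.ne_zero_iff.mp hvα0
  have hεlt : v ε < 1 := by
    rw [hε, v.map_mul, v.map_inv]
    calc v g * (v α)⁻¹ ≤ 1 * (v α)⁻¹ := by
          exact mul_le_mul_left hg _
      _ = (v α)⁻¹ := one_mul _
      _ < 1 := by
          rw [inv_lt_one₀ (zero_lt_iff.mpr hvα0)]
          exact hα
  have h1ε : v (1 + ε) = 1 := by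
    have := Valuation.map_add_eq_of_lt_left v (x := 1) (y := ε) (by simpa using hεlt)
    simpa using this
  have h1ε0 : (1 + ε) ≠ 0 := by
    intro h; rw [h] at h1ε; simp at h1ε
  have hvβ : 1 < v β := by
    rw [hβ, v.map_mul, v.map_inv, h1ε]
    simpa using hα
  refine ⟨hεlt, h1ε, hvβ, ?_⟩
  have hag : α + g ≠ 0 := by
    intro h
    have : 1 + ε = 0 := by rw [hε]; field_simp; linear_combination h
    exact h1ε0 this
  have h1 : α * g + α ^ 2 ≠ 0 := by
    have : α * g + α ^ 2 = α * (α + g) := by ring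
    rw [this]; exact mul_ne_zero hα0 hag
  have h2 : α ^ 2 * g + α ^ 3 ≠ 0 := by
    have : α ^ 2 * g + α ^ 3 = α * (α * g + α ^ 2) := by ring
    rw [this]; exact mul_ne_zero hα0 h1
  ext i j
  fin_cases i <;> fin_cases j <;>
    simp [Matrix.mul_apply, Fin.sum_univ_two, hβ, hε] <;>
    field_simp <;> ring
end

section
/- Let K be a field with a valuation v : K → Γ₀, with valuation ring 𝒪 and maximal ideal 𝔪. Let g be a unit of 𝒪 (i.e. v(g) = 1) and let α ∈ K \ 𝒪. Set β = g·α and ε = (g⁻¹ − 1)/(g·α). Then ε ∈ 𝔪, β ∈ K \ 𝒪, and the following identity of 2×2 matrices over K holds: [[g, 0], [0, g⁻¹]] * [[α, 0], [1, α⁻¹]] = [[1, 0], [ε, 1]] * [[β, 0], [1, β⁻¹]]. -/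
/-- The matrix computation of Example 2.7: multiplying a point at infinity of the
curve `x ↦ [[x,0],[1,x⁻¹]]` by a diagonal matrix with unit entry `g` moves it by an
element of `μ` to another point of the curve. -/
theorem diagonal_matrix_identity
    {K Γ₀ : Type*} [Field K] [LinearOrderedCommGroupWithZero Γ₀]
    (v : Valuation K Γ₀) (g α : K) (hg : v g = 1) (hα : 1 < v α)
    (ε β : K) (hβ : β = g * α) (hε : ε = (g⁻¹ - 1) / (g * α)) :
    v ε < 1 ∧ 1 < v β ∧
      (!![g, 0; 0, g⁻¹] : Matrix (Fin 2) (Fin 2) K) * !![α, 0; 1, α⁻¹] =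
        !![1, 0; ε, 1] * !![β, 0; 1, β⁻¹] := by
  have hg0 : g ≠ 0 := by
    intro h; rw [h, map_zero] at hg; exact zero_ne_one hg
  have hα0 : α ≠ 0 := by
    intro h; rw [h, map_zero] at hα; exact absurd hα (by simp)
  have hvα0 : v α ≠ 0 := fun h => by simp [h] at hα
  have hginv : v g⁻¹ = 1 := by rw [map_inv₀, hg, inv_one]
  have hvβ : v β = v α := by rw [hβ, map_mul, hg, one_mul]
  refine ⟨?_, ?_, ?_⟩
  · rw [hε, div_eq_mul_inv, map_mul, map_inv₀, map_mul, hg, one_mul]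
    have h1 : v (g⁻¹ - 1) ≤ 1 := by
      calc v (g⁻¹ - 1) ≤ max (v g⁻¹) (v 1) := Valuation.map_sub v _ _
        _ = 1 := by simp [hginv]
    calc v (g⁻¹ - 1) * (v α)⁻¹ ≤ 1 * (v α)⁻¹ := by
          exact mul_le_mul_left h1 _
      _ = (v α)⁻¹ := one_mul _
      _ < 1 := by
          exact inv_lt_one₀ (lt_of_le_of_ne (zero_le') (Ne.symm hvα0)) |>.mpr hα
  · rw [hvβ]; exact hα
  · have hgα : g * α ≠ 0 := mul_ne_zero hg0 hα0
    have hβ0 : β ≠ 0 := hβ ▸ hgα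
    ext i j
    fin_cases i <;> fin_cases j <;>
      simp [Matrix.mul_apply, Fin.sum_univ_succ, hβ, hε] <;>
      field_simp <;> ring
end

section
/- Let K be a field with a valuation v : K → Γ₀, with valuation ring 𝒪 and maximal ideal 𝔪, and let k ⊆ 𝒪 be an infinite subfield with k ∩ 𝔪 = {0}. Suppose k ⊆ C₁ ∪ … ∪ C_m, where each Cᵢ is a ball in K (a set of the form {x : v(x − c) ≤ γ} or {x : v(x − c) < γ} with c ∈ K and nonzero γ ∈ Γ₀). Then 𝒪 ⊆ Cᵢ for some i. -/
/-- If an infinite lifted copy `k` of the residue field is covered by finitely many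
balls, then one of the balls contains the whole valuation ring. -/
theorem valuation_ring_in_ball_of_cover
    {K Γ₀ : Type*} [Field K] [LinearOrderedCommGroupWithZero Γ₀]
    (v : Valuation K Γ₀)
    (k : Subfield K) (hkO : ∀ a ∈ k, v a ≤ 1) (hkm : ∀ a ∈ k, v a < 1 → a = 0)
    (hinf : (k : Set K).Infinite)
    (m : ℕ) (C : Fin m → Set K)
    (hC : ∀ i : Fin m,
      (∃ c : K, ∃ γ : Γ₀, γ ≠ 0 ∧ C i = {x : K | v (x - c) ≤ γ}) ∨
      (∃ c : K, ∃ γ : Γ₀, γ ≠ 0 ∧ C i = {x : K | v (x - c) < γ}))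
    (hcover : (k : Set K) ⊆ ⋃ i : Fin m, C i) :
    ∃ i : Fin m, {x : K | v x ≤ 1} ⊆ C i := by
  -- Some ball contains two distinct elements of k.
  have key : ∃ i : Fin m, ∃ a b : K, a ∈ k ∧ b ∈ k ∧ a ≠ b ∧ a ∈ C i ∧ b ∈ C i := by
    by_contra h
    push_neg at h
    have hfin : ∀ i : Fin m, (C i ∩ (k : Set K)).Finite := by
      intro i
      apply Set.Subsingleton.finite
      intro a ha b hb
      by_contra hab
      exact h i a b ha.2 hb.2 hab ha.1 hb.1
    have hsub : (k : Set K) ⊆ ⋃ i : Fin m, (C i ∩ (k : Set K)) := by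
      intro x hx
      rcases Set.mem_iUnion.1 (hcover hx) with ⟨i, hi⟩
      exact Set.mem_iUnion.2 ⟨i, hi, hx⟩
    exact hinf (Set.Finite.subset (Set.finite_iUnion hfin) hsub)
  obtain ⟨i, a, b, ha, hb, hab, haC, hbC⟩ := key
  have hvab : v (a - b) = 1 := by
    refine le_antisymm (hkO _ (sub_mem ha hb)) (not_lt.1 fun hlt => ?_)
    exact hab (sub_eq_zero.1 (hkm _ (sub_mem ha hb) hlt))
  refine ⟨i, ?_⟩
  rcases hC i with ⟨c, γ, hγ, hCi⟩ | ⟨c, γ, hγ, hCi⟩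
  · rw [hCi] at haC hbC ⊢
    have hac : v (a - c) ≤ γ := haC
    have hbc : v (b - c) ≤ γ := hbC
    have h1γ : (1 : Γ₀) ≤ γ := by
      calc (1 : Γ₀) = v (a - b) := hvab.symm
        _ = v ((a - c) - (b - c)) := by ring_nf
        _ ≤ max (v (a - c)) (v (b - c)) := v.map_sub _ _
        _ ≤ γ := max_le hac hbc
    intro x hx
    simp only [Set.mem_setOf_eq] at hx ⊢
    calc v (x - c) = v ((x - a) + (a - c)) := by rw [sub_add_sub_cancel]
      _ ≤ max (v (x - a)) (v (a - c)) := v.map_add _ _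
      _ ≤ γ := max_le (le_trans (le_trans (v.map_sub _ _)
          (max_le hx (hkO _ ha))) h1γ) hac
  · rw [hCi] at haC hbC ⊢
    have hac : v (a - c) < γ := haC
    have hbc : v (b - c) < γ := hbC
    have h1γ : (1 : Γ₀) < γ := by
      calc (1 : Γ₀) = v (a - b) := hvab.symm
        _ = v ((a - c) - (b - c)) := by ring_nf
        _ ≤ max (v (a - c)) (v (b - c)) := v.map_sub _ _
        _ < γ := max_lt hac hbc
    intro x hx
    simp only [Set.mem_setOf_eq] at hx ⊢
    calc v (x - c) = v ((x - a) + (a - c)) := by rw [sub_add_sub_cancel]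
      _ ≤ max (v (x - a)) (v (a - c)) := v.map_add _ _
      _ < γ := max_lt (lt_of_le_of_lt (le_trans (v.map_sub _ _)
          (max_le hx (hkO _ ha))) h1γ) hac
end

section
/- Let k be a field and let r be a positive irrational real number. In the field of Hahn series k((t^ℝ)) with value group ℝ and coefficients in k, the element t⁻¹ + t^r (i.e. the sum of the monomial with exponent −1 and coefficient 1 and the monomial with exponent r and coefficient 1) is transcendental over the k-subalgebra generated by t⁻¹ (the monomial with exponent −1 and coefficient 1). -/
set_option maxHeartbeats 1000000
set_option synthInstance.maxHeartbeats 400000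

open Polynomial

/-- In the Hahn series field `k((t^ℝ))`, for `r` a positive irrational real, the
element `t⁻¹ + t^r` is transcendental over the `k`-subalgebra generated by `t⁻¹`. -/
theorem hahn_series_transcendental
    {k : Type*} [Field k] (r : ℝ) (hr : 0 < r) (hirr : Irrational r) :
    Transcendental
      (Algebra.adjoin k {(HahnSeries.single (-1 : ℝ) (1 : k) : HahnSeries ℝ k)})
      (HahnSeries.single (-1 : ℝ) (1 : k) + HahnSeries.single r (1 : k)) := by
  classical
  set x : HahnSeries ℝ k := HahnSeries.single (-1 : ℝ) (1 : k) with hxdef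
  set y : HahnSeries ℝ k := HahnSeries.single r (1 : k) with hydef
  set R := Algebra.adjoin k {x} with hRdef
  have hxmem : x ∈ R := Algebra.subset_adjoin rfl
  -- supports of elements of R consist of nonpositive integers
  have hsupp : ∀ f : HahnSeries ℝ k, f ∈ R → ∀ a ∈ f.support, ∃ n : ℕ, a = -(n : ℝ) := by
    intro f hf
    induction hf using Algebra.adjoin_induction with
    | mem f hf =>
      intro a ha
      rcases hf with rfl
      have := HahnSeries.support_single_subset ha
      exact ⟨1, by simpa using this⟩
    | algebraMap c =>
      intro a ha
      have : a ∈ ({(0 : ℝ)} : Set ℝ) := by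
        rw [HahnSeries.algebraMap_apply', PowerSeries.algebraMap_apply, Algebra.algebraMap_self, RingHom.id_apply,
          HahnSeries.ofPowerSeries_C, HahnSeries.C_apply] at ha
        exact HahnSeries.support_single_subset ha
      exact ⟨0, by simpa using this⟩
    | add f g hf hg ihf ihg =>
      intro a ha
      rcases HahnSeries.support_add_subset _ _ ha with h | h
      · exact ihf a h
      · exact ihg a h
    | mul f g hf hg ihf ihg =>
      intro a ha
      obtain ⟨u, hu, v, hv, rfl⟩ := HahnSeries.support_mul_subset ha
      obtain ⟨n, rfl⟩ := ihf u hu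
      obtain ⟨m, rfl⟩ := ihg v hv
      exact ⟨n + m, by push_cast; ring⟩
  -- main step : t^r is transcendental over R
  have main : Transcendental R y := by
    rw [transcendental_iff]
    intro p hp
    set N := p.natDegree + 1 with hN
    set g : ℕ → HahnSeries ℝ k := fun i => (p.coeff i : HahnSeries ℝ k) * y ^ i with hg
    have hsum : ∑ i ∈ Finset.range N, g i = 0 := by
      rw [Polynomial.aeval_eq_sum_range] at hp
      rw [← hp]
      refine Finset.sum_congr rfl fun i _ => ?_
      rw [hg, Algebra.smul_def, Subalgebra.algebraMap_eq]
      rfl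
    have hyi : ∀ i : ℕ, y ^ i = HahnSeries.single ((i : ℝ) * r) (1 : k) := by
      intro i
      rw [hydef, HahnSeries.single_pow, one_pow, nsmul_eq_mul]
    have hform : ∀ i : ℕ, ∀ a ∈ (g i).support, ∃ m : ℕ, a = -(m : ℝ) + i * r := by
      intro i a ha
      rw [hg] at ha
      obtain ⟨u, hu, v, hv, rfl⟩ := HahnSeries.support_mul_subset ha
      obtain ⟨m, rfl⟩ := hsupp _ (p.coeff i).2 u hu
      rw [hyi i] at hv
      have := HahnSeries.eq_of_mem_support_single hv
      exact ⟨m, by rw [this]⟩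
    have hdisj : ∀ i j : ℕ, i ≠ j → ∀ a : ℝ, a ∈ (g i).support → a ∈ (g j).support → False := by
      intro i j hij a hai haj
      obtain ⟨m, hm⟩ := hform i a hai
      obtain ⟨n, hn⟩ := hform j a haj
      have hne : (i : ℝ) - j ≠ 0 := by
        simp only [sub_ne_zero]
        exact_mod_cast hij
      refine hirr ⟨((m : ℚ) - n) / ((i : ℚ) - j), ?_⟩
      have hcast : ((((m : ℚ) - n) / ((i : ℚ) - j) : ℚ) : ℝ)
          = ((m : ℝ) - n) / ((i : ℝ) - j) := by push_cast; ring
      rw [hcast, div_eq_iff hne]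
      have : -(m : ℝ) + i * r = -(n : ℝ) + j * r := hm ▸ hn ▸ rfl
      linarith [this]
    have hzero : ∀ j ∈ Finset.range N, (p.coeff j : HahnSeries ℝ k) = 0 := by
      intro j hj
      by_contra hc
      have hgj : g j ≠ 0 := by
        rw [hg]
        exact mul_ne_zero hc (by rw [hyi j]; exact HahnSeries.single_ne_zero one_ne_zero)
      obtain ⟨a, ha⟩ := HahnSeries.support_nonempty_iff.2 hgj
      have hcoeff : (g j).coeff a = 0 := by
        have h0 : (∑ i ∈ Finset.range N, g i).coeff a = 0 := by rw [hsum]; rfl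
        have hmap : (∑ i ∈ Finset.range N, g i).coeff a
            = ∑ i ∈ Finset.range N, (g i).coeff a :=
          map_sum (HahnSeries.coeff.addMonoidHom a) g (Finset.range N)
        rw [hmap] at h0
        rw [Finset.sum_eq_single_of_mem (f := fun i => (g i).coeff a) j hj
          (fun i _ hij => by
            by_contra hci
            exact hdisj i j hij a ((HahnSeries.mem_support _ _).2 hci) ha)] at h0
        exact h0
      exact (HahnSeries.mem_support _ _).1 ha hcoeff
    refine Polynomial.ext fun n => ?_
    rw [Polynomial.coeff_zero]
    by_cases hn : n < N
    · have := hzero n (Finset.mem_range.2 hn)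
      exact Subtype.ext this
    · exact Polynomial.coeff_eq_zero_of_natDegree_lt (by omega)
  -- transfer to x + y
  haveI : Nontrivial R := ⟨⟨0, 1, fun h => by
    have : (0 : HahnSeries ℝ k) = 1 := congrArg Subtype.val h
    exact zero_ne_one this⟩⟩
  have h1 : (Polynomial.X + Polynomial.C (⟨x, hxmem⟩ : R)).natDegree ≠ 0 := by
    rw [Polynomial.natDegree_X_add_C]; exact one_ne_zero
  have h2 : (Polynomial.X + Polynomial.C (⟨x, hxmem⟩ : R)).leadingCoeff ∈ nonZeroDivisors R := by
    rw [(Polynomial.monic_X_add_C _).leadingCoeff]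
    exact one_mem _
  have := main.aeval (Polynomial.X + Polynomial.C (⟨x, hxmem⟩ : R)) h1 h2
  have heval : Polynomial.aeval y (Polynomial.X + Polynomial.C (⟨x, hxmem⟩ : R)) = x + y := by
    rw [map_add, Polynomial.aeval_X, Polynomial.aeval_C, Subalgebra.algebraMap_eq, add_comm]
    rfl
  rwa [heval] at this
end
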